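/- Let λ > 0, let (A_k) be positive non-decreasing reals, and let μ_k be defined by μ_0 = λ/(λ+A_0), μ_k = μ_{k−1}A_{k−1}/(λ+A_k). Suppose additionally that A_k → ∞ and ∑_k μ_k = 1. Then for every k ≥ 0, A_k = λ·(∑_{j>k} μ_j)/μ_k. -/

import Mathlib

theorem A_from_tail_ratio (lam : ℝ) (hlam : 0 < lam) (A : ℕ → ℝ)
    (hApos : ∀ k, 0 < A k) (hAmono : Monotone A)
    (hAtop : Filter.Tendsto A Filter.atTop Filter.atTop)
    (μ : ℕ → ℝ) (hμ0 : μ 0 = lam / (lam + A 0))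
    (hμ : ∀ k : ℕ, 1 ≤ k → μ k = μ (k - 1) * A (k - 1) / (lam + A k))
    (hsum : HasSum μ 1) :
    ∀ k : ℕ, A k = lam * (∑' j : ℕ, μ (k + 1 + j)) / μ k := by
  have hden : ∀ k, (0:ℝ) < lam + A k := fun k => by have := hApos k; linarith
  have hμpos : ∀ k, 0 < μ k := by
    intro k
    induction k with
    | zero => rw [hμ0]; exact div_pos hlam (hden 0)
    | succ n ih =>
      rw [hμ (n+1) (Nat.le_add_left 1 n)]
      simp only [Nat.add_sub_cancel]
      have := hApos n
      have := hden (n+1)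
      positivity
  have key : ∀ k, lam * (∑ j ∈ Finset.range (k+1), μ j) + A k * μ k = lam := by
    intro k
    induction k with
    | zero =>
      rw [Finset.range_one, Finset.sum_singleton, hμ0]
      field_simp [(hden 0).ne']
    | succ n ih =>
      rw [Finset.sum_range_succ]
      have hrec : μ (n+1) * (lam + A (n+1)) = μ n * A n := by
        rw [hμ (n+1) (Nat.le_add_left 1 n)]
        simp only [Nat.add_sub_cancel]
        rw [div_mul_cancel₀ _ (hden (n+1)).ne']
      nlinarith [hrec, ih]
  intro k
  have hS : (∑ j ∈ Finset.range (k+1), μ j) + (∑' j : ℕ, μ (j + (k+1))) = 1 := by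
    rw [Summable.sum_add_tsum_nat_add (k+1) hsum.summable, hsum.tsum_eq]
  have htail : (∑' j : ℕ, μ (k + 1 + j)) = (∑' j : ℕ, μ (j + (k+1))) := by
    apply tsum_congr; intro j; ring_nf
  rw [htail]
  have hAμ : A k * μ k = lam * (∑' j : ℕ, μ (j + (k+1))) := by
    have := key k
    nlinarith [hS]
  rw [eq_div_iff (hμpos k).ne']
  linarith [hAμ]
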